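/- Let A, B ∈ ℝ^{d×d} be symmetric positive definite, set M = B^{1/2} A^{-1} B^{1/2}, and let β1 ≥ β2 ≥ … ≥ βd > 0 be the eigenvalues of M with a corresponding orthonormal basis of eigenvectors p1, …, pd. Fix a nonzero w ∈ ℝ^d, set r = B^{1/2} w and ξi = piᵀ r / ‖r‖, and define f(w') = (1/2)·w'ᵀ A w' − w'ᵀ B w for w' ∈ ℝ^d, whose minimum value is f* = −(1/2)·wᵀ B A^{-1} B w. Then f(β1 w) − f* = (‖r‖²/2)·Σ_{i=1}^d (ξi²/βi)·(β1 − βi)², and this quantity is at most ((wᵀ B w)/2) · β1² · Σ_{i=2}^d ξi²/βi; in particular min_{α∈ℝ} f(α w) − f* ≤ ((wᵀ B w)/2) · β1² · Σ_{i=2}^d ξi²/βi. -/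

import Mathlib

open Matrix Finset

section Aux
variable {n : Type*} [Fintype n] [DecidableEq n]

lemma ortho_complete (p : n → n → ℝ)
    (horth : ∀ i j, p i ⬝ᵥ p j = if i = j then 1 else 0) (k l : n) :
    ∑ i, p i k * p i l = if k = l then 1 else 0 := by
  let P : Matrix n n ℝ := Matrix.of p
  have h1 : P * Pᵀ = 1 := by
    ext i j
    simpa [P, Matrix.mul_apply, Matrix.one_apply, dotProduct] using horth i j
  have h2 : Pᵀ * P = 1 := mul_eq_one_comm.mp h1
  have := congrFun (congrFun h2 k) l
  simpa [P, Matrix.mul_apply, Matrix.one_apply] using this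

omit [DecidableEq n] in
lemma dot_sum_left (a : n → ℝ) (p : n → n → ℝ) (v : n → ℝ) :
    (∑ i, a i • p i) ⬝ᵥ v = ∑ i, a i * (p i ⬝ᵥ v) := by
  simp only [dotProduct, Finset.sum_apply, Pi.smul_apply, smul_eq_mul,
    Finset.sum_mul, Finset.mul_sum]
  rw [Finset.sum_comm]
  apply Finset.sum_congr rfl; intro i _
  apply Finset.sum_congr rfl; intro k _
  ring

omit [DecidableEq n] in
lemma dot_sum_right (a : n → ℝ) (p : n → n → ℝ) (v : n → ℝ) :
    v ⬝ᵥ (∑ i, a i • p i) = ∑ i, a i * (v ⬝ᵥ p i) := by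
  simp only [dotProduct, Finset.sum_apply, Pi.smul_apply, smul_eq_mul,
    Finset.sum_mul, Finset.mul_sum]
  rw [Finset.sum_comm]
  apply Finset.sum_congr rfl; intro i _
  apply Finset.sum_congr rfl; intro k _
  ring

lemma ortho_expand (p : n → n → ℝ)
    (horth : ∀ i j, p i ⬝ᵥ p j = if i = j then 1 else 0) (r : n → ℝ) :
    r = ∑ i, (p i ⬝ᵥ r) • p i := by
  funext k
  rw [Finset.sum_apply]
  simp only [Pi.smul_apply, smul_eq_mul, dotProduct]
  calc r k = ∑ l, r l * (if l = k then 1 else 0) := by simp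
    _ = ∑ l, r l * ∑ i, p i l * p i k := by
        simp_rw [ortho_complete p horth]
    _ = ∑ i, (∑ l, p i l * r l) * p i k := by
        simp_rw [Finset.mul_sum, Finset.sum_mul]
        rw [Finset.sum_comm]
        apply Finset.sum_congr rfl; intro i _
        apply Finset.sum_congr rfl; intro l _
        ring

lemma ortho_dot (p : n → n → ℝ)
    (horth : ∀ i j, p i ⬝ᵥ p j = if i = j then 1 else 0) (a b : n → ℝ) :
    (∑ i, a i • p i) ⬝ᵥ (∑ j, b j • p j) = ∑ i, a i * b i := by
  rw [dot_sum_left]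
  apply Finset.sum_congr rfl; intro i _
  rw [dot_sum_right]
  simp [horth, mul_ite, Finset.sum_ite_eq]

omit [DecidableEq n] in
lemma mulVec_sum_smul (M : Matrix n n ℝ) (a : n → ℝ) (p : n → n → ℝ) :
    M *ᵥ (∑ i, a i • p i) = ∑ i, a i • (M *ᵥ p i) := by
  simp only [← Matrix.mulVecLin_apply, map_sum, LinearMap.map_smul]

end Aux

/-- Euclidean norm of a vector in `ℝ^d`. -/
noncomputable def vnorm {n : Type*} [Fintype n] (x : n → ℝ) : ℝ := Real.sqrt (x ⬝ᵥ x)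

open scoped ComplexOrder in
noncomputable def Matrix.PosSemidef.sqrt {n 𝕜 : Type*} [Fintype n] [RCLike 𝕜] [DecidableEq n]
    {A : Matrix n n 𝕜} (hA : A.PosSemidef) : Matrix n n 𝕜 :=
  hA.1.eigenvectorUnitary.1 * diagonal ((↑) ∘ (√·) ∘ hA.1.eigenvalues) *
    (star hA.1.eigenvectorUnitary : Matrix n n 𝕜)

lemma psd_sqrt_facts {n : Type*} [Fintype n] [DecidableEq n] {B : Matrix n n ℝ}
    (hB : B.PosSemidef) :
    (Matrix.PosSemidef.sqrt hB)ᵀ = Matrix.PosSemidef.sqrt hB ∧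
      Matrix.PosSemidef.sqrt hB * Matrix.PosSemidef.sqrt hB = B := by
  have hU : star hB.1.eigenvectorUnitary.1 * hB.1.eigenvectorUnitary.1 = 1 :=
    Matrix.UnitaryGroup.star_mul_self _
  constructor
  · simp only [Matrix.PosSemidef.sqrt, Matrix.transpose_mul, Matrix.diagonal_transpose,
      Matrix.star_eq_conjTranspose, Matrix.conjTranspose_eq_transpose_of_trivial,
      Matrix.transpose_transpose, Matrix.mul_assoc]
  · conv_rhs => rw [hB.1.spectral_theorem]
    rw [Unitary.conjStarAlgAut_apply]
    simp only [Matrix.PosSemidef.sqrt]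
    have hD : diagonal (((↑) : ℝ → ℝ) ∘ (√·) ∘ hB.1.eigenvalues) *
        diagonal (((↑) : ℝ → ℝ) ∘ (√·) ∘ hB.1.eigenvalues) =
        diagonal (RCLike.ofReal ∘ hB.1.eigenvalues) := by
      rw [Matrix.diagonal_mul_diagonal]
      congr 1; funext i
      simp [Real.mul_self_sqrt (hB.eigenvalues_nonneg i)]
    calc _ = hB.1.eigenvectorUnitary.1 * (diagonal (((↑) : ℝ → ℝ) ∘ (√·) ∘ hB.1.eigenvalues) *
        (star hB.1.eigenvectorUnitary.1 * hB.1.eigenvectorUnitary.1) *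
        diagonal (((↑) : ℝ → ℝ) ∘ (√·) ∘ hB.1.eigenvalues)) * star hB.1.eigenvectorUnitary.1 := by
          simp only [Matrix.mul_assoc]; rfl
      _ = _ := by rw [hU, Matrix.mul_one, hD]


/-- warm start for least squares: the suboptimality of the scaled
initializer `β₁ w` equals `(‖r‖²/2) Σᵢ (ξᵢ²/βᵢ)(β₁-βᵢ)²`, which is bounded by
`((wᵀBw)/2) β₁² Σ_{i≥2} ξᵢ²/βᵢ`; in particular the best scaling `α w` obeys the
same bound. -/
theorem stmt_7 {d : ℕ} (A B : Matrix (Fin (d+1)) (Fin (d+1)) ℝ)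
    (hA : A.PosDef) (hB : B.PosDef)
    (M : Matrix (Fin (d+1)) (Fin (d+1)) ℝ)
    (hM : M = (Matrix.PosSemidef.sqrt hB.posSemidef) * A⁻¹ * (Matrix.PosSemidef.sqrt hB.posSemidef))
    (β : Fin (d+1) → ℝ) (p : Fin (d+1) → Fin (d+1) → ℝ)
    (hβpos : ∀ i, 0 < β i) (hanti : Antitone β)
    (horth : ∀ i j, p i ⬝ᵥ p j = if i = j then 1 else 0)
    (heig : ∀ i, M.mulVec (p i) = β i • p i)
    (w : Fin (d+1) → ℝ) (hw : w ≠ 0)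
    (r : Fin (d+1) → ℝ) (hr : r = (Matrix.PosSemidef.sqrt hB.posSemidef).mulVec w)
    (ξ : Fin (d+1) → ℝ) (hξ : ∀ i, ξ i = (p i ⬝ᵥ r) / vnorm r)
    (f : (Fin (d+1) → ℝ) → ℝ)
    (hf : ∀ w', f w' = (1/2) * (w' ⬝ᵥ A.mulVec w') - w' ⬝ᵥ B.mulVec w)
    (fstar : ℝ)
    (hfstar : fstar = -(1/2) * (w ⬝ᵥ B.mulVec ((A⁻¹).mulVec (B.mulVec w)))) :
    f (β 0 • w) - fstar = (vnorm r ^ 2 / 2) * ∑ i, (ξ i ^ 2 / β i) * (β 0 - β i) ^ 2 ∧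
    (vnorm r ^ 2 / 2) * ∑ i, (ξ i ^ 2 / β i) * (β 0 - β i) ^ 2
      ≤ ((w ⬝ᵥ B.mulVec w) / 2) * β 0 ^ 2 * ∑ i ∈ Finset.univ.erase 0, ξ i ^ 2 / β i ∧
    ∃ α : ℝ, f (α • w) - fstar
      ≤ ((w ⬝ᵥ B.mulVec w) / 2) * β 0 ^ 2 * ∑ i ∈ Finset.univ.erase 0, ξ i ^ 2 / β i := by
  set S := Matrix.PosSemidef.sqrt hB.posSemidef with hSdef
  have hSsym : Sᵀ = S := by
    have h := (psd_sqrt_facts hB.posSemidef).1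
    exact h
  have hSS : S * S = B := (psd_sqrt_facts hB.posSemidef).2
  have hβne : ∀ i, β i ≠ 0 := fun i => (hβpos i).ne'
  set c : Fin (d+1) → ℝ := fun i => p i ⬝ᵥ r with hcdef
  have hrexp : r = ∑ i, c i • p i := ortho_expand p horth r
  -- transport vecMul through the symmetric S
  have hvm : ∀ x : Fin (d+1) → ℝ, x ᵥ* S = S *ᵥ x := by
    intro x
    conv_lhs => rw [← hSsym]
    rw [Matrix.vecMul_transpose]
  have hdotS : ∀ x y : Fin (d+1) → ℝ, x ⬝ᵥ S *ᵥ y = (S *ᵥ x) ⬝ᵥ y := by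
    intro x y
    rw [Matrix.dotProduct_mulVec, hvm]
  -- b = w ⬝ᵥ B w = r ⬝ᵥ r = ∑ cᵢ²
  have hb : w ⬝ᵥ B *ᵥ w = ∑ i, c i * c i := by
    rw [← hSS, ← Matrix.mulVec_mulVec, hdotS, ← hr]
    rw [hrexp] ; exact ortho_dot p horth c c
  have hbpos : (0:ℝ) < w ⬝ᵥ B *ᵥ w := by
    have := hB.dotProduct_mulVec_pos hw
    simpa using this
  -- vnorm r ^ 2 = b
  have hrr : r ⬝ᵥ r = w ⬝ᵥ B *ᵥ w := by
    rw [hb, hrexp]; exact ortho_dot p horth c c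
  have hvn : vnorm r ^ 2 = w ⬝ᵥ B *ᵥ w := by
    rw [vnorm, Real.sq_sqrt (by rw [hrr]; exact hbpos.le), hrr]
  have hvnpos : 0 < vnorm r := by
    have h0 : (0:ℝ) < r ⬝ᵥ r := hrr ▸ hbpos
    exact Real.sqrt_pos.mpr h0
  -- ξ i ^ 2 relation
  have hxi2 : ∀ i, ξ i ^ 2 * (vnorm r ^ 2) = c i * c i := by
    intro i
    rw [hξ i]
    field_simp [hcdef]
    ring
  -- r ⬝ᵥ M r = ∑ cᵢ² βᵢ
  have hMr : M *ᵥ r = ∑ i, (c i * β i) • p i := by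
    conv_lhs => rw [hrexp]
    rw [mulVec_sum_smul]
    simp_rw [heig, smul_smul]
  have hrMr : r ⬝ᵥ M *ᵥ r = ∑ i, c i * (c i * β i) := by
    rw [hMr]
    conv_lhs => rw [hrexp]
    exact ortho_dot p horth c _
  -- fstar
  have hfstar' : fstar = -(1/2) * ∑ i, c i * (c i * β i) := by
    rw [hfstar, ← hrMr]
    congr 1
    rw [Matrix.mulVec_mulVec, Matrix.mulVec_mulVec]
    have hBA : B * A⁻¹ * B = S * M * S := by
      rw [hM, ← hSS]; simp only [Matrix.mul_assoc]
    rw [hBA, ← Matrix.mulVec_mulVec, ← hr, ← Matrix.mulVec_mulVec, hdotS, ← hr]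
  -- a = w ⬝ᵥ A w = ∑ cᵢ²/βᵢ
  have hSunit : IsUnit S := by
    rw [Matrix.isUnit_iff_isUnit_det]
    have : S.det * S.det = B.det := by rw [← Matrix.det_mul, hSS]
    have hBdet : B.det ≠ 0 := hB.det_pos.ne'
    have : S.det ≠ 0 := fun h => hBdet (by rw [← this, h, mul_zero])
    exact this.isUnit
  have ha : w ⬝ᵥ A *ᵥ w = ∑ i, c i * (c i / β i) := by
    set u : Fin (d+1) → ℝ := fun k => (∑ i, (c i / β i) • p i) k with hudef
    have hu : u = ∑ i, (c i / β i) • p i := rfl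
    have hMu : M *ᵥ u = r := by
      rw [hu, mulVec_sum_smul]
      simp_rw [heig, smul_smul, div_mul_cancel₀ _ (hβne _)]
      exact hrexp.symm
    have hSinj : Function.Injective (S.mulVec) := Matrix.mulVec_injective_iff_isUnit.mpr hSunit
    have h1 : S *ᵥ (A⁻¹ *ᵥ (S *ᵥ u)) = S *ᵥ w := by
      rw [Matrix.mulVec_mulVec, Matrix.mulVec_mulVec, ← hM, hMu, hr]
    have h2 : A⁻¹ *ᵥ (S *ᵥ u) = w := hSinj h1
    have h3 : S *ᵥ u = A *ᵥ w := by
      have h4 : A *ᵥ (A⁻¹ *ᵥ (S *ᵥ u)) = A *ᵥ w := congrArg (fun x => A *ᵥ x) h2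
      rwa [Matrix.mulVec_mulVec, Matrix.mul_nonsing_inv A
        ((Matrix.isUnit_iff_isUnit_det A).mp hA.isUnit), Matrix.one_mulVec] at h4
    rw [← h3, hdotS, ← hr, hrexp, hu]
    exact ortho_dot p horth c _
  -- f (α • w)
  have hfα : ∀ α : ℝ, f (α • w) = α^2/2 * (w ⬝ᵥ A *ᵥ w) - α * (w ⬝ᵥ B *ᵥ w) := by
    intro α
    rw [hf]
    rw [Matrix.mulVec_smul, smul_dotProduct, dotProduct_smul, smul_dotProduct]
    simp [smul_eq_mul]
    ring
  -- suboptimality identity for general α, in terms of c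
  have hkey : ∀ α : ℝ, f (α • w) - fstar = ∑ i, (1/2) * ((c i * c i) / β i) * (α - β i)^2 := by
    intro α
    rw [hfα, hfstar', ha, hb, Finset.mul_sum, Finset.mul_sum, Finset.mul_sum,
      ← Finset.sum_sub_distrib, ← Finset.sum_sub_distrib]
    apply Finset.sum_congr rfl; intro i _
    field_simp [hβne i]
    ring
  -- Part 1
  have hpart1 : f (β 0 • w) - fstar
      = (vnorm r ^ 2 / 2) * ∑ i, (ξ i ^ 2 / β i) * (β 0 - β i) ^ 2 := by
    rw [hkey, Finset.mul_sum]
    apply Finset.sum_congr rfl; intro i _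
    rw [← hxi2 i]
    ring
  -- Part 2
  have hsum_split : ∑ i, (ξ i ^ 2 / β i) * (β 0 - β i) ^ 2
      = ∑ i ∈ Finset.univ.erase 0, (ξ i ^ 2 / β i) * (β 0 - β i) ^ 2 := by
    rw [← Finset.add_sum_erase _ _ (Finset.mem_univ 0)]
    simp
  have hpart2 : (vnorm r ^ 2 / 2) * ∑ i, (ξ i ^ 2 / β i) * (β 0 - β i) ^ 2
      ≤ ((w ⬝ᵥ B.mulVec w) / 2) * β 0 ^ 2 * ∑ i ∈ Finset.univ.erase 0, ξ i ^ 2 / β i := by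
    rw [hvn]
    conv_rhs => rw [mul_assoc, Finset.mul_sum]
    apply mul_le_mul_of_nonneg_left _ (by positivity)
    rw [hsum_split]
    apply Finset.sum_le_sum
    intro i _
    have h1 : 0 ≤ ξ i ^ 2 / β i := div_nonneg (sq_nonneg _) (hβpos i).le
    have h2 : (β 0 - β i) ^ 2 ≤ β 0 ^ 2 := by
      have hle := hanti (Fin.zero_le i)
      nlinarith [hβpos i, hβpos 0]
    calc (ξ i ^ 2 / β i) * (β 0 - β i) ^ 2 ≤ (ξ i ^ 2 / β i) * β 0 ^ 2 :=
          mul_le_mul_of_nonneg_left h2 h1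
      _ = β 0 ^ 2 * (ξ i ^ 2 / β i) := mul_comm _ _
  exact ⟨hpart1, hpart2, β 0, hpart1.trans_le hpart2⟩
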